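/- arXiv:2007.15467 — 4 statements merged into one kernel-verified Lean document; each statement's English description precedes it below -/
import Mathlib

section
/- Let V be a lex-segment of monomials of degree j in k[x_1,...,x_n] (with respect to the degree-lexicographic order with x_1 > x_2 > ... > x_n), and let v be the lexicographically smallest monomial in V. If u is a monomial of degree j-1 dividing v and u belongs to a lex-segment W of degree j-1 monomials whose image under multiplication by the variables lands in V, then u is the lexicographically smallest monomial of W. More precisely: if W is a lex-segment in degree j-1, V is a lex-segment in degree j with S_1·W ⊆ span(V), v is the lex-smallest monomial of V, and u ∈ W divides v, then u is the lex-smallest monomial of W. -/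
open MvPolynomial

noncomputable section EGHDefs

/-- Total degree of an exponent vector. -/
def mdeg {n : ℕ} (a : Fin n →₀ ℕ) : ℕ := a.sum fun _ e => e

/-- `monLT a b` : the monomial `x^a` is strictly smaller than `x^b` in the
lexicographic order with `x_1 > x_2 > ... > x_n`. -/
def monLT {n : ℕ} (a b : Fin n →₀ ℕ) : Prop :=
  ∃ i : Fin n, (∀ j : Fin n, j < i → a j = b j) ∧ a i < b i

/-- A lex-segment of exponent vectors in degree `j`. -/
def LexSeg {n : ℕ} (j : ℕ) (V : Set (Fin n →₀ ℕ)) : Prop :=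
  (∀ a ∈ V, mdeg a = j) ∧ ∀ a ∈ V, ∀ b : Fin n →₀ ℕ, mdeg b = j → monLT a b → b ∈ V

variable (k : Type) [Field k] {n : ℕ}

/-- Hilbert function of a (homogeneous) ideal `I`: the `k`-dimension of its degree `j` part. -/
def HF (I : Ideal (MvPolynomial (Fin n) k)) (j : ℕ) : ℕ :=
  Module.finrank k
    ↥(Submodule.restrictScalars k (I : Submodule (MvPolynomial (Fin n) k) (MvPolynomial (Fin n) k))
      ⊓ homogeneousSubmodule (Fin n) k j)

/-- Hilbert function of the quotient `S/I` in degree `j`. -/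
def HFq (I : Ideal (MvPolynomial (Fin n) k)) (j : ℕ) : ℕ :=
  Module.finrank k
    ↥((homogeneousSubmodule (Fin n) k j).map (Ideal.Quotient.mkₐ k I).toLinearMap)

/-- `I` is a homogeneous ideal. -/
def IsHomog (I : Ideal (MvPolynomial (Fin n) k)) : Prop :=
  ∀ f ∈ I, ∀ j : ℕ, homogeneousComponent j f ∈ I

/-- `f 0, f 1, ..., f (h-1)` is a regular sequence. -/
def IsRegSeq {h : ℕ} (f : Fin h → MvPolynomial (Fin n) k) : Prop :=
  Ideal.span (Set.range f) ≠ ⊤ ∧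
  ∀ i : Fin h, ∀ g : MvPolynomial (Fin n) k,
    g * f i ∈ Ideal.span (f '' {j | j < i}) → g ∈ Ideal.span (f '' {j | j < i})

/-- The monomial complete intersection `(x_1^{d_1}, ..., x_h^{d_h})`. -/
def powIdeal {h : ℕ} (hh : h ≤ n) (d : Fin h → ℕ) : Ideal (MvPolynomial (Fin n) k) :=
  Ideal.span (Set.range fun i : Fin h => (X (Fin.castLE hh i) : MvPolynomial (Fin n) k) ^ d i)

/-- `L` is a lexicographic (monomial) ideal. -/
def IsLexIdeal (L : Ideal (MvPolynomial (Fin n) k)) : Prop :=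
  (∀ f ∈ L, ∀ a ∈ f.support, (monomial a (1 : k)) ∈ L) ∧
  ∀ a b : Fin n →₀ ℕ, mdeg a = mdeg b → monLT a b →
    (monomial a (1 : k)) ∈ L → monomial b (1 : k) ∈ L

/-- `𝕃` is a `d`-LPP (lex-plus-power) ideal. -/
def IsLPP {h : ℕ} (hh : h ≤ n) (d : Fin h → ℕ) (𝕃 : Ideal (MvPolynomial (Fin n) k)) : Prop :=
  ∃ L : Ideal (MvPolynomial (Fin n) k), IsLexIdeal k L ∧ 𝕃 = powIdeal k hh d ⊔ L

/-- `I` contains a regular sequence of degrees `d`. -/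
def ContainsRS {h : ℕ} (d : Fin h → ℕ) (I : Ideal (MvPolynomial (Fin n) k)) : Prop :=
  ∃ f : Fin h → MvPolynomial (Fin n) k,
    IsRegSeq k f ∧ (∀ i, (f i).IsHomogeneous (d i)) ∧ ∀ i, f i ∈ I

/-- `I` satisfies the Eisenbud-Green-Harris conjecture for the degree sequence `d`:
there is a `d`-LPP ideal with the same Hilbert function as `I`. -/
def EGH {h : ℕ} (hh : h ≤ n) (d : Fin h → ℕ) (I : Ideal (MvPolynomial (Fin n) k)) : Prop :=
  ∃ 𝕃 : Ideal (MvPolynomial (Fin n) k), IsLPP k hh d 𝕃 ∧ ∀ j : ℕ, HF k 𝕃 j = HF k I j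

end EGHDefs

/-! Multiplication by a variable is strictly monotone for the lex order, so if some `w ∈ W` were
lex-smaller than `u`, then `w · x_i ∈ V` would be lex-smaller than `u · x_i = v`. -/

theorem monLT_iff_toLex_lt {n : ℕ} {a b : Fin n →₀ ℕ} : monLT a b ↔ toLex a < toLex b :=
  Iff.rfl

theorem eq_or_monLT_iff_toLex_le {n : ℕ} {a b : Fin n →₀ ℕ} :
    b = a ∨ monLT a b ↔ toLex a ≤ toLex b := by
  rw [le_iff_eq_or_lt, monLT_iff_toLex_lt, toLex_inj, eq_comm]

theorem stmt2_general (n : ℕ) (V W : Set (Fin n →₀ ℕ))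
    (hmul : ∀ w ∈ W, ∀ i : Fin n, w + Finsupp.single i 1 ∈ V)
    (v : Fin n →₀ ℕ) (hvmin : ∀ a ∈ V, a = v ∨ monLT v a)
    (u : Fin n →₀ ℕ) (i : Fin n) (hdiv : u + Finsupp.single i 1 = v) :
    ∀ w ∈ W, w = u ∨ monLT u w := by
  intro w hw
  have hvw : toLex (u + Finsupp.single i 1) ≤ toLex (w + Finsupp.single i 1) :=
    hdiv ▸ eq_or_monLT_iff_toLex_le.mp (hvmin _ (hmul w hw i))
  exact eq_or_monLT_iff_toLex_le.mpr (le_of_add_le_add_right hvw)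

/-- if `v` is the lex-smallest monomial of a lex-segment `V` in degree `j`,
`W` is a lex-segment in degree `j-1` with `S_1 · W ⊆ V`, and `u ∈ W` divides `v`, then `u`
is the lex-smallest monomial of `W`. -/
theorem stmt2 (n j : ℕ) (hj : 1 ≤ j) (V W : Set (Fin n →₀ ℕ))
    (hV : LexSeg j V) (hW : LexSeg (j - 1) W)
    (hmul : ∀ w ∈ W, ∀ i : Fin n, w + Finsupp.single i 1 ∈ V)
    (v : Fin n →₀ ℕ) (hv : v ∈ V) (hvmin : ∀ a ∈ V, a = v ∨ monLT v a)
    (u : Fin n →₀ ℕ) (hu : u ∈ W) (i : Fin n) (hdiv : u + Finsupp.single i 1 = v) :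
    ∀ w ∈ W, w = u ∨ monLT u w :=
  stmt2_general n V W hmul v hvmin u i hdiv
end

section
/- If 𝕃 is a d-LPP ideal in S = k[x_1,...,x_n] for a degree sequence d = (d_1,...,d_h), and V is the graded vector space spanned by the monomials of 𝕃 not lying in the monomial complete intersection P = (x_1^{d_1},...,x_h^{d_h}), so that 𝕃 = P ⊕ V, then: if V_D ≠ 0 for some degree D, then V_j ≠ 0 for all j with D ≤ j ≤ Σ_{i=1}^h (d_i - 1). -/
open MvPolynomial

/-! A monomial `x^b` lies outside `P = (x_1^{d_1}, …, x_h^{d_h})` exactly when `b_i < d_i` for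
all `i ≤ h`. Below the socle degree `∑ (d_i - 1)` such a `b` cannot have `b_i = d_i - 1` for every
`i`, so some `x_i` can be multiplied in while staying outside `P`; the product stays in `𝕃` because
`𝕃` is an ideal. Induction on the degree then climbs from `D` to the socle degree. -/

section MonomialCompleteIntersection

variable {k : Type} [Field k] {n h : ℕ} (hh : h ≤ n) (d : Fin h → ℕ)

theorem monomial_mem_powIdeal_iff (c : Fin n →₀ ℕ) :
    monomial c (1 : k) ∈ powIdeal k hh d ↔ ∃ i, d i ≤ c (Fin.castLE hh i) := by
  have hgens : (Set.range fun i => (X (Fin.castLE hh i) : MvPolynomial (Fin n) k) ^ d i)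
      = (fun s => monomial s (1 : k)) ''
        Set.range fun i => Finsupp.single (Fin.castLE hh i) (d i) := by
    rw [← Set.range_comp]
    simp only [Function.comp_def, X_pow_eq_monomial]
  rw [powIdeal, hgens, mem_ideal_span_monomial_image]
  simp [Finsupp.single_le_iff]

theorem monomial_notMem_powIdeal_iff (c : Fin n →₀ ℕ) :
    monomial c (1 : k) ∉ powIdeal k hh d ↔ ∀ i, c (Fin.castLE hh i) < d i := by
  simp [monomial_mem_powIdeal_iff]

end MonomialCompleteIntersection

theorem mdeg_add_single {n : ℕ} (b : Fin n →₀ ℕ) (i : Fin n) :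
    mdeg (b + Finsupp.single i 1) = mdeg b + 1 := by
  unfold mdeg
  rw [Finsupp.sum_add_index' (fun _ => rfl) (fun _ _ _ => rfl), Finsupp.sum_single_index rfl]

theorem sum_castLE_le_mdeg {n h : ℕ} (hh : h ≤ n) (b : Fin n →₀ ℕ) :
    ∑ i : Fin h, b (Fin.castLE hh i) ≤ mdeg b := by
  rw [mdeg, Finsupp.sum_fintype _ _ fun _ => rfl]
  exact (Finset.sum_map _ (Fin.castLEEmb hh) _).symm.trans_le
    (Finset.sum_le_sum_of_subset (Finset.subset_univ _))

theorem exists_add_one_lt_of_mdeg_lt {n h : ℕ} (hh : h ≤ n) (d : Fin h → ℕ) (b : Fin n →₀ ℕ)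
    (hb : ∀ i, b (Fin.castLE hh i) < d i) (hdeg : mdeg b < ∑ i, (d i - 1)) :
    ∃ i, b (Fin.castLE hh i) + 1 < d i := by
  by_contra! hfull
  have hsocle : ∑ i, (d i - 1) ≤ mdeg b :=
    (Finset.sum_le_sum fun i _ => by have := hb i; have := hfull i; omega).trans
      (sum_castLE_le_mdeg hh b)
  omega

theorem exists_monomial_mem_notMem_powIdeal_succ {k : Type} [Field k] {n h : ℕ} (hh : h ≤ n)
    (d : Fin h → ℕ) (I : Ideal (MvPolynomial (Fin n) k)) (b : Fin n →₀ ℕ)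
    (hbI : monomial b (1 : k) ∈ I) (hbP : monomial b (1 : k) ∉ powIdeal k hh d)
    (hdeg : mdeg b < ∑ i, (d i - 1)) :
    ∃ c : Fin n →₀ ℕ, mdeg c = mdeg b + 1 ∧
      monomial c (1 : k) ∈ I ∧ monomial c (1 : k) ∉ powIdeal k hh d := by
  rw [monomial_notMem_powIdeal_iff] at hbP
  obtain ⟨i, hi⟩ := exists_add_one_lt_of_mdeg_lt hh d b hbP hdeg
  refine ⟨b + Finsupp.single (Fin.castLE hh i) 1, mdeg_add_single _ _, ?_, ?_⟩
  · rw [← mul_one (1 : k), ← monomial_mul]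
    exact I.mul_mem_right _ hbI
  · rw [monomial_notMem_powIdeal_iff]
    intro i'
    rcases eq_or_ne i' i with rfl | hne
    · simpa using hi
    · simpa [Finsupp.single_apply, (Fin.castLE_injective hh).ne hne.symm] using hbP i'

theorem stmt4_general (k : Type) [Field k] {n h : ℕ} (hh : h ≤ n) (d : Fin h → ℕ)
    (𝕃 : Ideal (MvPolynomial (Fin n) k))
    (D : ℕ) (a : Fin n →₀ ℕ) (ha : mdeg a = D)
    (haL : monomial a (1 : k) ∈ 𝕃) (haP : monomial a (1 : k) ∉ powIdeal k hh d) :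
    ∀ j : ℕ, D ≤ j → j ≤ ∑ i, (d i - 1) →
      ∃ b : Fin n →₀ ℕ, mdeg b = j ∧
        monomial b (1 : k) ∈ 𝕃 ∧ monomial b (1 : k) ∉ powIdeal k hh d := by
  intro j hDj hjS
  induction j, hDj using Nat.le_induction with
  | base => exact ⟨a, ha, haL, haP⟩
  | succ j _ ih =>
    obtain ⟨b, rfl, hbL, hbP⟩ := ih (Nat.le_of_succ_le hjS)
    exact exists_monomial_mem_notMem_powIdeal_succ hh d 𝕃 b hbL hbP hjS

/-- for an LPP ideal `𝕃 = P ⊕ V`, if `V` is nonzero in degree `D` then it is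
nonzero in every degree between `D` and the socle degree `∑ (d_i - 1)`. -/
theorem stmt4 (k : Type) [Field k] {n h : ℕ} (hh : h ≤ n) (d : Fin h → ℕ)
    (hmono : Monotone d) (hpos : ∀ i, 1 ≤ d i)
    (𝕃 : Ideal (MvPolynomial (Fin n) k)) (hL : IsLPP k hh d 𝕃)
    (D : ℕ) (a : Fin n →₀ ℕ) (ha : mdeg a = D)
    (haL : monomial a (1 : k) ∈ 𝕃) (haP : monomial a (1 : k) ∉ powIdeal k hh d) :
    ∀ j : ℕ, D ≤ j → j ≤ ∑ i, (d i - 1) →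
      ∃ b : Fin n →₀ ℕ, mdeg b = j ∧
        monomial b (1 : k) ∈ 𝕃 ∧ monomial b (1 : k) ∉ powIdeal k hh d :=
  stmt4_general k hh d 𝕃 D a ha haL haP
end

section
/- Let I ⊆ S = k[x_1,...,x_n] be a homogeneous ideal containing a regular sequence of degrees d = (d_1,...,d_h), and suppose there exists a d-LPP ideal 𝕃_j for each j ≥ 0 such that HF(I; j) = HF(𝕃_j; j) and HF(I; j+1) ≥ HF(𝕃_j; j+1) (i.e., I satisfies EGH_{d,n}(j) for all j). Then there exists a single d-LPP ideal 𝕃 with HF(𝕃; j) = HF(I; j) for all j. -/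
open MvPolynomial

/-!
A `d`-LPP ideal `𝕃 = P + L` is a monomial ideal whose degree-`m` monomials are those of
`P = (x_1^{d_1}, …, x_h^{d_h})` together with a lex segment. Lex segments of one degree are
nested, so between two `d`-LPP ideals an inequality of Hilbert functions in degree `m` is an
inclusion of their degree-`m` monomials. The growth condition of `EGH_{d,n}(j)` then says that
`x_i (𝕃_j)_j ⊆ (𝕃_j)_{j+1} ⊆ (𝕃_{j+1})_{j+1}`, so the pieces `(𝕃_j)_j` are the graded pieces of
one ideal `P + L`, where `L` is spanned by the monomials of degree `j` of the lex parts `L_j`.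
This `L` is again lex: if `x^a ∣ x^b` and `x^b ≤ x^c` in lex order in one degree, then `x^c`
has a divisor of degree `deg a` that is lex-above `x^a`.
-/

namespace Finsupp

variable {σ : Type*}

theorem exists_le_le_degree_eq {w c : σ →₀ ℕ} {r : ℕ} (hwc : w ≤ c) (hw : w.degree ≤ r)
    (hc : r ≤ c.degree) : ∃ u, w ≤ u ∧ u ≤ c ∧ u.degree = r := by
  have hsplit : c - w + w = c := tsub_add_cancel_of_le hwc
  have hdeg : (c - w).degree + w.degree = c.degree := by rw [← map_add, hsplit]
  obtain ⟨v, hv, hvdeg⟩ := exists_le_degree_eq (c - w) (r - w.degree) (by omega)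
  refine ⟨v + w, le_add_self, hsplit ▸ add_le_add_left hv w, ?_⟩
  rw [map_add, hvdeg]
  omega

theorem le_induction {P : (σ →₀ ℕ) → Prop} (hP : ∀ a i, P a → P (a + single i 1))
    {a b : σ →₀ ℕ} (ha : P a) (hab : a ≤ b) : P b := by
  suffices ∀ c a, P a → P (a + c) from add_tsub_cancel_of_le hab ▸ this (b - a) a ha
  intro c
  induction c using Finsupp.induction_linear with
  | zero => simp
  | add f g hf hg => exact fun a ha => add_assoc a f g ▸ hg _ (hf a ha)
  | single i e =>
    induction e with
    | zero => simp
    | succ e ih => exact fun a ha => by rw [single_add, ← add_assoc]; exact hP _ i (ih a ha)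

theorem exists_toLex_le_le_of_le [LinearOrder σ] {u b c : σ →₀ ℕ} (hub : u ≤ b)
    (hdeg : b.degree = c.degree) (hbc : toLex b ≤ toLex c) :
    ∃ u', u'.degree = u.degree ∧ toLex u ≤ toLex u' ∧ u' ≤ c := by
  by_cases huc : u ≤ c
  · exact ⟨u, rfl, le_rfl, huc⟩
  obtain ⟨p, hpre, hp⟩ := Lex.lt_iff.mp
    (hbc.lt_of_ne fun h => huc (hub.trans (toLex.injective h).le))
  obtain ⟨q, hq⟩ : ∃ q, c q < u q := by simpa [Finsupp.le_def] using huc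
  -- `w` raises `u` at the first place `p` where `b` and `c` differ, and stays below `c`.
  set w := u ⊓ c + single p 1
  have hwc : w ≤ c := fun i => by
    rcases eq_or_ne i p with rfl | hip
    · have hbci : b i < c i := hp
      have := hub i
      simp only [w, coe_add, Pi.add_apply, inf_apply, single_eq_same]
      omega
    · simp [w, single_eq_of_ne hip]
  have huw : toLex u < toLex w := Lex.lt_iff.mpr ⟨p, fun j hj => by
    have hbcj : b j = c j := hpre j hj
    have := hub j
    show u j = w j
    simp [w, single_eq_of_ne hj.ne]
    omega, show u p < w p by
      have hbcp : b p < c p := hp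
      have := hub p
      simp [w]
      omega⟩
  have hwu : w.degree ≤ u.degree := by
    have hle : u ⊓ c + single q 1 ≤ u := fun i => by
      rcases eq_or_ne i q with rfl | hiq
      · simp only [coe_add, Pi.add_apply, inf_apply, single_eq_same]
        omega
      · simp [single_eq_of_ne hiq]
    simpa [w] using degree_mono hle
  obtain ⟨u', hwu', hu'c, hu'deg⟩ := exists_le_le_degree_eq hwc hwu (hdeg ▸ degree_mono hub)
  exact ⟨u', hu'deg, (huw.trans_le (toLex_monotone hwu')).le, hu'c⟩

end Finsupp

theorem LexSeg.subset_or_subset {n j : ℕ} {V W : Set (Fin n →₀ ℕ)} (hV : LexSeg j V)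
    (hW : LexSeg j W) : V ⊆ W ∨ W ⊆ V := by
  refine or_iff_not_imp_left.mpr fun hVW b hb => ?_
  obtain ⟨a, ha, haW⟩ := Set.not_subset.mp hVW
  rcases lt_trichotomy (toLex a) (toLex b) with hab | hab | hab
  · exact hV.2 a ha b (hW.1 b hb) hab
  · rwa [← toLex.injective hab]
  · exact absurd (hW.2 b hb a (hV.1 a ha) hab) haW

namespace MvPolynomial

variable {σ R : Type*} [CommSemiring R]

variable (R) in
noncomputable def monomialSpan (A : Set (σ →₀ ℕ)) : Ideal (MvPolynomial σ R) :=
  Ideal.span ((fun a => monomial a 1) '' A)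

def IsMonomialIdeal (I : Ideal (MvPolynomial σ R)) : Prop :=
  ∀ f ∈ I, ∀ a ∈ f.support, monomial a 1 ∈ I

def monomialsOfDegree (I : Ideal (MvPolynomial σ R)) (m : ℕ) : Set (σ →₀ ℕ) :=
  {a | a.degree = m ∧ monomial a 1 ∈ I}

theorem monomial_mem_of_le {I : Ideal (MvPolynomial σ R)} {a b : σ →₀ ℕ}
    (ha : monomial a (1 : R) ∈ I) (hab : a ≤ b) : monomial b (1 : R) ∈ I := by
  simpa [monomial_mul, tsub_add_cancel_of_le hab] using I.mul_mem_left (monomial (b - a) 1) ha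

theorem monomial_mem_monomialSpan [Nontrivial R] {A : Set (σ →₀ ℕ)} {b : σ →₀ ℕ} :
    monomial b (1 : R) ∈ monomialSpan R A ↔ ∃ a ∈ A, a ≤ b := by
  classical
  simp [monomialSpan, mem_ideal_span_monomial_image, support_monomial]

theorem isMonomialIdeal_monomialSpan [Nontrivial R] (A : Set (σ →₀ ℕ)) :
    IsMonomialIdeal (monomialSpan R A) := fun _ hf a ha =>
  monomial_mem_monomialSpan.mpr (mem_ideal_span_monomial_image.mp hf a ha)

namespace IsMonomialIdeal

variable {I J : Ideal (MvPolynomial σ R)}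

theorem eq_monomialSpan (hI : IsMonomialIdeal I) :
    I = monomialSpan R {a | monomial a 1 ∈ I} := by
  refine le_antisymm (fun f hf => ?_) (Ideal.span_le.mpr ?_)
  · exact mem_ideal_span_monomial_image.mpr fun a ha => ⟨a, hI f hf a ha, le_rfl⟩
  · rintro _ ⟨a, ha, rfl⟩
    exact ha

theorem sup_eq (hI : IsMonomialIdeal I) (hJ : IsMonomialIdeal J) :
    I ⊔ J = monomialSpan R ({a | monomial a 1 ∈ I} ∪ {a | monomial a 1 ∈ J}) := by
  conv_lhs => rw [hI.eq_monomialSpan, hJ.eq_monomialSpan]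
  rw [monomialSpan, monomialSpan, monomialSpan, Set.image_union, Ideal.span_union]

theorem sup [Nontrivial R] (hI : IsMonomialIdeal I) (hJ : IsMonomialIdeal J) :
    IsMonomialIdeal (I ⊔ J) :=
  hI.sup_eq hJ ▸ isMonomialIdeal_monomialSpan _

theorem monomial_mem_sup [Nontrivial R] (hI : IsMonomialIdeal I) (hJ : IsMonomialIdeal J)
    {b : σ →₀ ℕ} : monomial b (1 : R) ∈ I ⊔ J ↔ monomial b 1 ∈ I ∨ monomial b 1 ∈ J := by
  rw [hI.sup_eq hJ, monomial_mem_monomialSpan]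
  constructor
  · rintro ⟨a, ha | ha, hab⟩
    exacts [.inl (monomial_mem_of_le ha hab), .inr (monomial_mem_of_le ha hab)]
  · rintro (hb | hb)
    exacts [⟨b, .inl hb, le_rfl⟩, ⟨b, .inr hb, le_rfl⟩]

theorem monomialsOfDegree_sup [Nontrivial R] (hI : IsMonomialIdeal I)
    (hJ : IsMonomialIdeal J) (m : ℕ) :
    monomialsOfDegree (I ⊔ J) m = monomialsOfDegree I m ∪ monomialsOfDegree J m := by
  ext b
  simp [monomialsOfDegree, hI.monomial_mem_sup hJ, and_or_left]

end IsMonomialIdeal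

theorem finite_monomialsOfDegree [Finite σ] (I : Ideal (MvPolynomial σ R)) (m : ℕ) :
    (monomialsOfDegree I m).Finite :=
  (Finsupp.finite_of_degree_le m).subset fun _ ha => ha.1.le

end MvPolynomial

namespace MvPolynomial.IsMonomialIdeal

variable {k : Type} [Field k] {n : ℕ} {I : Ideal (MvPolynomial (Fin n) k)}

theorem homogeneous_inf_eq_span (hI : IsMonomialIdeal I) (m : ℕ) :
    Submodule.restrictScalars k (I : Submodule (MvPolynomial (Fin n) k) (MvPolynomial (Fin n) k))
      ⊓ homogeneousSubmodule (Fin n) k m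
    = Submodule.span k ((fun a => monomial a (1 : k)) '' monomialsOfDegree I m) := by
  refine le_antisymm (fun f hf => ?_) (Submodule.span_le.mpr ?_)
  · obtain ⟨hfI, hfm⟩ := Submodule.mem_inf.mp hf
    rw [← support_sum_monomial_coeff f]
    refine Submodule.sum_mem _ fun a ha => ?_
    have hdeg : a.degree = m := by
      by_contra hne
      exact mem_support_iff.mp ha ((mem_homogeneousSubmodule m f).mp hfm |>.coeff_eq_zero hne)
    rw [← mul_one (coeff a f), ← smul_eq_mul, ← smul_monomial]
    exact Submodule.smul_mem _ _ (Submodule.subset_span ⟨a, ⟨hdeg, hI f hfI a ha⟩, rfl⟩)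
  · rintro _ ⟨a, ⟨hdeg, ha⟩, rfl⟩
    exact Submodule.mem_inf.mpr ⟨ha, isHomogeneous_monomial _ hdeg⟩

theorem HF_eq_ncard (hI : IsMonomialIdeal I) (m : ℕ) :
    HF k I m = (monomialsOfDegree I m).ncard := by
  have := (finite_monomialsOfDegree I m).fintype
  have hli : LinearIndependent k
      fun a : monomialsOfDegree I m => monomial (a : Fin n →₀ ℕ) (1 : k) :=
    (basisMonomials (Fin n) k).linearIndependent.comp _ Subtype.val_injective
  rw [HF, hI.homogeneous_inf_eq_span, Set.image_eq_range, finrank_span_eq_card hli,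
    Set.ncard_eq_toFinset_card', Set.toFinset_card]

end MvPolynomial.IsMonomialIdeal

section LexPlusPowers

variable {k : Type} [Field k] {n h : ℕ} {hh : h ≤ n} {d : Fin h → ℕ}

theorem powIdeal_eq_monomialSpan (hh : h ≤ n) (d : Fin h → ℕ) :
    powIdeal k hh d =
      monomialSpan k (Set.range fun i => Finsupp.single (Fin.castLE hh i) (d i)) := by
  rw [powIdeal, monomialSpan, ← Set.range_comp]
  simp [Function.comp_def, X_pow_eq_monomial]

theorem isMonomialIdeal_powIdeal : IsMonomialIdeal (powIdeal k hh d) :=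
  (powIdeal_eq_monomialSpan (k := k) hh d).symm ▸ isMonomialIdeal_monomialSpan _

theorem IsLexIdeal.isMonomialIdeal {L : Ideal (MvPolynomial (Fin n) k)} (hL : IsLexIdeal k L) :
    IsMonomialIdeal L :=
  hL.1

theorem IsLexIdeal.lexSeg {L : Ideal (MvPolynomial (Fin n) k)} (hL : IsLexIdeal k L) (m : ℕ) :
    LexSeg m (monomialsOfDegree L m) :=
  ⟨fun _ ha => ha.1, fun a ha b hb hab => ⟨hb, hL.2 a b (ha.1.trans hb.symm) hab ha.2⟩⟩

theorem isLexIdeal_monomialSpan {A : Set (Fin n →₀ ℕ)}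
    (hA : ∀ a ∈ A, ∀ b, mdeg a = mdeg b → monLT a b → b ∈ A) :
    IsLexIdeal k (monomialSpan k A) := by
  refine ⟨isMonomialIdeal_monomialSpan A, fun a b hab hlt ha => ?_⟩
  obtain ⟨s, hs, hsa⟩ := monomial_mem_monomialSpan.mp ha
  obtain ⟨s', hdeg, hss', hs'b⟩ :=
    Finsupp.exists_toLex_le_le_of_le hsa hab (monLT_iff_toLex_lt.mp hlt).le
  refine monomial_mem_monomialSpan.mpr ⟨s', ?_, hs'b⟩
  rcases hss'.eq_or_lt with hss' | hss'
  · rwa [← toLex.injective hss']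
  · exact hA s hs s' hdeg.symm hss'

namespace IsLPP

variable {𝕃 𝕃' : Ideal (MvPolynomial (Fin n) k)}

theorem isMonomialIdeal (h𝕃 : IsLPP k hh d 𝕃) : IsMonomialIdeal 𝕃 := by
  obtain ⟨L, hL, rfl⟩ := h𝕃
  exact isMonomialIdeal_powIdeal.sup hL.isMonomialIdeal

theorem monomialsOfDegree_subset (h𝕃 : IsLPP k hh d 𝕃) (h𝕃' : IsLPP k hh d 𝕃') {m : ℕ}
    (hle : HF k 𝕃 m ≤ HF k 𝕃' m) : monomialsOfDegree 𝕃 m ⊆ monomialsOfDegree 𝕃' m := by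
  rw [h𝕃.isMonomialIdeal.HF_eq_ncard, h𝕃'.isMonomialIdeal.HF_eq_ncard] at hle
  obtain ⟨L, hL, rfl⟩ := h𝕃
  obtain ⟨L', hL', rfl⟩ := h𝕃'
  rw [isMonomialIdeal_powIdeal.monomialsOfDegree_sup hL.isMonomialIdeal,
    isMonomialIdeal_powIdeal.monomialsOfDegree_sup hL'.isMonomialIdeal] at hle ⊢
  rcases (hL.lexSeg m).subset_or_subset (hL'.lexSeg m) with hLL' | hL'L
  · exact Set.union_subset_union_right _ hLL'
  · exact (Set.eq_of_subset_of_ncard_le (Set.union_subset_union_right _ hL'L) hle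
      ((finite_monomialsOfDegree _ m).union (finite_monomialsOfDegree _ m))).ge

end IsLPP

theorem exists_isLPP_monomialsOfDegree_eq {𝕃 : ℕ → Ideal (MvPolynomial (Fin n) k)}
    (h𝕃 : ∀ j, IsLPP k hh d (𝕃 j))
    (hstep : ∀ j, monomialsOfDegree (𝕃 j) (j + 1) ⊆ monomialsOfDegree (𝕃 (j + 1)) (j + 1)) :
    ∃ 𝕃', IsLPP k hh d 𝕃' ∧ ∀ j, monomialsOfDegree 𝕃' j = monomialsOfDegree (𝕃 j) j := by
  choose L hL h𝕃L using h𝕃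
  have hup : ∀ a b : Fin n →₀ ℕ, monomial a (1 : k) ∈ 𝕃 a.degree → a ≤ b →
      monomial b (1 : k) ∈ 𝕃 b.degree := fun a b =>
    Finsupp.le_induction (P := fun a => monomial a (1 : k) ∈ 𝕃 a.degree) fun a i ha => by
      have hdeg : (a + Finsupp.single i 1).degree = a.degree + 1 := by simp
      rw [hdeg]
      exact (hstep a.degree ⟨hdeg, monomial_mem_of_le ha le_self_add⟩).2
  set A := {a : Fin n →₀ ℕ | monomial a (1 : k) ∈ L a.degree}
  have hA : IsLexIdeal k (monomialSpan k A) := isLexIdeal_monomialSpan fun a ha b hab hlt =>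
    (hL b.degree).2 a b hab hlt ((show a.degree = b.degree from hab) ▸ ha)
  refine ⟨powIdeal k hh d ⊔ monomialSpan k A, ⟨_, hA, rfl⟩, fun j => ?_⟩
  ext b
  refine and_congr_right fun hb => ?_
  rw [isMonomialIdeal_powIdeal.monomial_mem_sup hA.isMonomialIdeal, monomial_mem_monomialSpan,
    h𝕃L j, isMonomialIdeal_powIdeal.monomial_mem_sup (hL j).isMonomialIdeal]
  constructor
  · rintro (hP | ⟨a, ha, hab⟩)
    · exact .inl hP
    have hb𝕃 : monomial b (1 : k) ∈ 𝕃 j :=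
      hb ▸ hup a b ((h𝕃L a.degree).symm ▸ Ideal.mem_sup_right ha) hab
    rwa [h𝕃L j, isMonomialIdeal_powIdeal.monomial_mem_sup (hL j).isMonomialIdeal] at hb𝕃
  · rintro (hP | hbL)
    · exact .inl hP
    · exact .inr ⟨b, by simpa [A, hb] using hbL, le_rfl⟩

end LexPlusPowers

theorem stmt14_general (k : Type) [Field k] {n h : ℕ} (hh : h ≤ n)
    (d : Fin h → ℕ)
    (I : Ideal (MvPolynomial (Fin n) k))
    (hj : ∀ j : ℕ, ∃ 𝕃 : Ideal (MvPolynomial (Fin n) k), IsLPP k hh d 𝕃 ∧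
      HF k I j = HF k 𝕃 j ∧ HF k 𝕃 (j + 1) ≤ HF k I (j + 1)) :
    ∃ 𝕃 : Ideal (MvPolynomial (Fin n) k), IsLPP k hh d 𝕃 ∧
      ∀ j : ℕ, HF k 𝕃 j = HF k I j := by
  choose 𝕃 h𝕃 hHF hHF_succ using hj
  obtain ⟨𝕃', h𝕃', hmon⟩ := exists_isLPP_monomialsOfDegree_eq h𝕃 fun j =>
    (h𝕃 j).monomialsOfDegree_subset (h𝕃 (j + 1)) ((hHF_succ j).trans (hHF (j + 1)).le)
  refine ⟨𝕃', h𝕃', fun j => ?_⟩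
  rw [hHF j, h𝕃'.isMonomialIdeal.HF_eq_ncard, (h𝕃 j).isMonomialIdeal.HF_eq_ncard, hmon j]

/-- if `I` satisfies the degree-by-degree condition `EGH_{d,n}(j)` for every
`j`, then `I` satisfies `EGH_{d,n}`: a single `d`-LPP ideal matches the whole Hilbert
function of `I`. -/
theorem stmt14 (k : Type) [Field k] {n h : ℕ} (hh : h ≤ n)
    (d : Fin h → ℕ) (hmono : Monotone d) (hpos : ∀ i, 1 ≤ d i)
    (I : Ideal (MvPolynomial (Fin n) k)) (hI : IsHomog k I) (hrs : ContainsRS k d I)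
    (hj : ∀ j : ℕ, ∃ 𝕃 : Ideal (MvPolynomial (Fin n) k), IsLPP k hh d 𝕃 ∧
      HF k I j = HF k 𝕃 j ∧ HF k 𝕃 (j + 1) ≤ HF k I (j + 1)) :
    ∃ 𝕃 : Ideal (MvPolynomial (Fin n) k), IsLPP k hh d 𝕃 ∧
      ∀ j : ℕ, HF k 𝕃 j = HF k I j :=
  stmt14_general k hh d I hj
end

section
/- Let 𝕃 be a d-LPP ideal in S = k[x_1,...,x_n] with n = h, let D be a degree with 𝕃_D ≠ S_D, and let u = out(𝕃; D) be the lex-largest monomial of degree D not in 𝕃. If u lies in k[x_{n-1}, x_n] with u ≤_lex x_{n-1}^{d_{n-1}-1} x_n^{d_n - d_{n-1}}, then HF(S/(𝕃 + (u, x_n^{d_n})); D) ≤ D, that is, adjoining u and x_n^{d_n} to 𝕃 leaves at most D standard monomials in degree D. -/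
open MvPolynomial

set_option maxHeartbeats 1000000 in
/-- if the lex-largest degree-`D` monomial `u` outside the `d`-LPP ideal `𝕃`
(with `h = n`) lies in `k[x_{n-1}, x_n]` and `u ≤_lex x_{n-1}^{d_{n-1}-1} x_n^{d_n-d_{n-1}}`,
then `HF(S/(𝕃 + (u, x_n^{d_n})); D) ≤ D`. -/
theorem stmt15 (k : Type) [Field k] {n : ℕ} (hn : 2 ≤ n) (d : Fin n → ℕ)
    (hmono : Monotone d) (hpos : ∀ i, 1 ≤ d i)
    (𝕃 : Ideal (MvPolynomial (Fin n) k)) (hL : IsLPP k (le_refl n) d 𝕃) (D : ℕ)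
    (u : Fin n →₀ ℕ) (hud : mdeg u = D) (huL : monomial u (1 : k) ∉ 𝕃)
    (humax : ∀ w : Fin n →₀ ℕ, mdeg w = D → monomial w (1 : k) ∉ 𝕃 → w = u ∨ monLT w u)
    (husupp : ∀ i : Fin n, (i : ℕ) < n - 2 → u i = 0)
    (hulex : u = Finsupp.single (⟨n - 2, by omega⟩ : Fin n) (d ⟨n - 2, by omega⟩ - 1) +
          Finsupp.single (⟨n - 1, by omega⟩ : Fin n) (d ⟨n - 1, by omega⟩ - d ⟨n - 2, by omega⟩) ∨
        monLT u (Finsupp.single (⟨n - 2, by omega⟩ : Fin n) (d ⟨n - 2, by omega⟩ - 1) +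
          Finsupp.single (⟨n - 1, by omega⟩ : Fin n) (d ⟨n - 1, by omega⟩ - d ⟨n - 2, by omega⟩))) :
    HFq k (𝕃 ⊔ Ideal.span {monomial u (1 : k),
      (X (⟨n - 1, by omega⟩ : Fin n) : MvPolynomial (Fin n) k) ^ d ⟨n - 1, by omega⟩}) D ≤ D := by
  classical
  have h2 : n - 2 < n := by omega
  have h1 : n - 1 < n := by omega
  set i2 : Fin n := ⟨n - 2, h2⟩ with hi2
  set i1 : Fin n := ⟨n - 1, h1⟩ with hi1
  have hi12 : i2 ≠ i1 := by
    intro h; apply_fun Fin.val at h; simp [hi2, hi1] at h; omega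
  set J : Ideal (MvPolynomial (Fin n) k) := 𝕃 ⊔ Ideal.span {monomial u (1 : k),
      (X (⟨n - 1, by omega⟩ : Fin n) : MvPolynomial (Fin n) k) ^ d ⟨n - 1, by omega⟩} with hJ
  have mdegf : ∀ v : Fin n →₀ ℕ, mdeg v = ∑ j : Fin n, v j := fun v =>
    Finsupp.sum_fintype _ _ (fun _ => rfl)
  have huD : u i2 ≤ D := by
    rw [← hud, mdegf]
    exact Finset.single_le_sum (fun j _ => Nat.zero_le _) (Finset.mem_univ i2)
  -- key structural fact about standard monomials of degree D
  have key : ∀ a : Fin n →₀ ℕ, mdeg a = D → monomial a (1 : k) ∉ 𝕃 → a ≠ u →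
      a = Finsupp.single i2 (a i2) + Finsupp.single i1 (D - a i2) ∧ a i2 < D := by
    intro a ha haL hau
    rcases humax a ha haL with h | h
    · exact absurd h hau
    obtain ⟨i, hagree, hlt⟩ := h
    have hiu : (i : ℕ) = n - 2 ∨ (i : ℕ) = n - 1 := by
      have : ¬ ((i : ℕ) < n - 2) := fun hc => by
        have := husupp i hc; omega
      omega
    have hine : (i : ℕ) ≠ n - 1 := by
      intro hival
      -- then a j = u j for all j ≠ i, and a i < u i, contradicting equal degrees
      have hale : ∀ j : Fin n, a j ≤ u j := by
        intro j
        by_cases hj : j < i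
        · exact le_of_eq (hagree j hj)
        · have : j = i := by
            apply Fin.ext
            have hj' : ¬ ((j : ℕ) < (i : ℕ)) := hj
            have : (j : ℕ) < n := j.isLt
            omega
          rw [this]; exact le_of_lt hlt
      have : ∑ j : Fin n, a j < ∑ j : Fin n, u j :=
        Finset.sum_lt_sum (fun j _ => hale j) ⟨i, Finset.mem_univ i, hlt⟩
      rw [← mdegf, ← mdegf, ha, hud] at this
      omega
    have hi2eq : i = i2 := by apply Fin.ext; simp only [hi2]; omega
    rw [hi2eq] at hagree hlt
    have hzero : ∀ j : Fin n, (j : ℕ) < n - 2 → a j = 0 := by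
      intro j hj
      have : j < i2 := by simp only [Fin.lt_def, hi2]; omega
      rw [hagree j this]; exact husupp j hj
    have hsum : a i2 + a i1 = D := by
      rw [← ha, mdegf]
      rw [← Finset.sum_subset (Finset.subset_univ {i2, i1})]
      · rw [Finset.sum_pair hi12]
      · intro j _ hj
        simp only [Finset.mem_insert, Finset.mem_singleton] at hj
        push_neg at hj
        apply hzero
        have := j.isLt
        have h2' : (j : ℕ) ≠ n - 2 := fun hc => hj.1 (Fin.ext hc)
        have h1' : (j : ℕ) ≠ n - 1 := fun hc => hj.2 (Fin.ext hc)
        omega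
    constructor
    · ext j
      by_cases hj2 : j = i2
      · subst hj2
        simp [Finsupp.single_apply, hi12, Ne.symm hi12]
      · by_cases hj1 : j = i1
        · subst hj1
          simp [Finsupp.single_apply, hi12, Ne.symm hi12]
          omega
        · have hjlt : (j : ℕ) < n - 2 := by
            have := j.isLt
            have h2' : (j : ℕ) ≠ n - 2 := fun hc => hj2 (Fin.ext hc)
            have h1' : (j : ℕ) ≠ n - 1 := fun hc => hj1 (Fin.ext hc)
            omega
          have h2j : i2 ≠ j := fun h => hj2 h.symm
          have h1j : i1 ≠ j := fun h => hj1 h.symm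
          simp [Finsupp.single_apply, h2j, h1j, hzero j hjlt]
    · omega
  -- the generating set
  set g : MvPolynomial (Fin n) k ⧸ J → Prop := fun _ => True with hg -- dummy
  set s : Finset (MvPolynomial (Fin n) k ⧸ J) := (Finset.range D).image
    (fun c => Ideal.Quotient.mk J
      (monomial (Finsupp.single i2 c + Finsupp.single i1 (D - c)) (1 : k))) with hs
  have hmem : ∀ a : Fin n →₀ ℕ, mdeg a = D →
      Ideal.Quotient.mk J (monomial a (1 : k)) ∈ Submodule.span k (s : Set _) := by
    intro a ha
    by_cases haL : monomial a (1 : k) ∈ 𝕃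
    · rw [Ideal.Quotient.eq_zero_iff_mem.mpr (Ideal.mem_sup_left haL)]
      exact Submodule.zero_mem _
    by_cases hau : a = u
    · subst hau
      have : monomial a (1 : k) ∈ J := by
        apply Ideal.mem_sup_right
        exact Ideal.subset_span (by simp)
      rw [Ideal.Quotient.eq_zero_iff_mem.mpr this]
      exact Submodule.zero_mem _
    obtain ⟨heq, hlt⟩ := key a ha haL hau
    apply Submodule.subset_span
    rw [Finset.coe_image, Finset.coe_range]
    exact ⟨a i2, hlt, congrArg (fun b => Ideal.Quotient.mk J (monomial b (1 : k))) heq.symm⟩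
  -- image of degree-D part is contained in the span of s
  have hsub : (homogeneousSubmodule (Fin n) k D).map (Ideal.Quotient.mkₐ k J).toLinearMap ≤
      Submodule.span k (s : Set _) := by
    rintro x ⟨f, hf, rfl⟩
    have hf' : f.IsHomogeneous D := hf
    have : (Ideal.Quotient.mkₐ k J).toLinearMap f =
        ∑ a ∈ f.support, (coeff a f) • (Ideal.Quotient.mkₐ k J).toLinearMap (monomial a (1 : k)) := by
      conv_lhs => rw [f.as_sum]
      rw [map_sum]
      refine Finset.sum_congr rfl (fun a _ => ?_)
      rw [← map_smul]
      congr 1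
      rw [smul_monomial, smul_eq_mul, mul_one]
    rw [this]
    refine Submodule.sum_mem _ (fun a haf => Submodule.smul_mem _ _ ?_)
    have hmk : (Ideal.Quotient.mkₐ k J).toLinearMap (monomial a (1 : k)) =
        Ideal.Quotient.mk J (monomial a (1 : k)) := rfl
    rw [hmk]
    apply hmem
    have := hf' (mem_support_iff.mp haf)
    simpa [Finsupp.weight_apply, mdeg, smul_eq_mul] using this
  -- conclude
  unfold HFq
  have e1 : Module.finrank k
      ↥((homogeneousSubmodule (Fin n) k D).map (Ideal.Quotient.mkₐ k J).toLinearMap) ≤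
      Module.finrank k ↥(Submodule.span k (s : Set (MvPolynomial (Fin n) k ⧸ J))) :=
    Submodule.finrank_mono hsub
  have e2 : Module.finrank k ↥(Submodule.span k (s : Set (MvPolynomial (Fin n) k ⧸ J))) ≤
      s.card := finrank_span_finset_le_card s
  have e3 : s.card ≤ D := le_trans Finset.card_image_le (le_of_eq (Finset.card_range D))
  exact le_trans e1 (le_trans e2 e3)
end
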